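/- If a compact LOTS X is monotonically countably metacompact, then X is monotonically countably compact: every countable open cover U admits a finite open refinement s(U) covering X such that U ≺ V implies s(U) ≺ s(V). -/

import Mathlib

open Set TopologicalSpace

def PointFinite {X : Type*} (C : Set (Set X)) : Prop :=
  ∀ x : X, {U ∈ C | x ∈ U}.Finite

def Refines {X : Type*} (A B : Set (Set X)) : Prop :=
  ∀ U ∈ A, ∃ V ∈ B, U ⊆ V

def IsOpenCoverSets {X : Type*} [TopologicalSpace X] (C : Set (Set X)) : Prop :=
  (∀ U ∈ C, IsOpen U) ∧ ⋃₀ C = Set.univ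

def MonotonicallyMetacompact (X : Type*) [TopologicalSpace X] : Prop :=
  ∃ r : Set (Set X) → Set (Set X),
    (∀ U, IsOpenCoverSets U →
      IsOpenCoverSets (r U) ∧ PointFinite (r U) ∧ Refines (r U) U) ∧
    (∀ U V, IsOpenCoverSets U → IsOpenCoverSets V → Refines U V → Refines (r U) (r V))

def MonotonicallyCountablyMetacompact (X : Type*) [TopologicalSpace X] : Prop :=
  ∃ r : Set (Set X) → Set (Set X),
    (∀ U, IsOpenCoverSets U → U.Countable →
      IsOpenCoverSets (r U) ∧ PointFinite (r U) ∧ Refines (r U) U) ∧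
    (∀ U V, IsOpenCoverSets U → IsOpenCoverSets V → U.Countable → V.Countable →
      Refines U V → Refines (r U) (r V))

def IsPerfectSpace (X : Type*) [TopologicalSpace X] : Prop :=
  ∀ C : Set X, IsClosed C → ∃ f : ℕ → Set X, (∀ n, IsOpen (f n)) ∧ C = ⋂ n, f n

def St {X : Type*} (x : X) (C : Set (Set X)) : Set X := ⋃₀ {G ∈ C | x ∈ G}

def IsDevelopment {X : Type*} [TopologicalSpace X] (G : ℕ → Set (Set X)) : Prop :=
  (∀ n, IsOpenCoverSets (G n)) ∧
  ∀ x : X, ∀ U : Set X, IsOpen U → x ∈ U → ∃ n, St x (G n) ⊆ U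

def IsMooreSpace (X : Type*) [TopologicalSpace X] : Prop :=
  RegularSpace X ∧ T1Space X ∧ ∃ G : ℕ → Set (Set X), IsDevelopment G

def Metacompact (X : Type*) [TopologicalSpace X] : Prop :=
  ∀ U : Set (Set X), IsOpenCoverSets U →
    ∃ V, IsOpenCoverSets V ∧ PointFinite V ∧ Refines V U

/-! ### Auxiliary definitions -/

/-- The family of order-convex components of members of `A`. -/
def ConvFam {X : Type*} [LinearOrder X] (A : Set (Set X)) : Set (Set X) :=
  {C | ∃ G ∈ A, ∃ x ∈ G, C = Set.ordConnectedComponent G x}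

/-- The family of maximal members of `A`. -/
def MaxFam {X : Type*} (A : Set (Set X)) : Set (Set X) :=
  {C | C ∈ A ∧ ∀ D ∈ A, C ⊆ D → C = D}

section Aux

variable {X : Type*} [LinearOrder X]

lemma ConvFam.nonempty {A : Set (Set X)} {C : Set X} (hC : C ∈ ConvFam A) : C.Nonempty := by
  obtain ⟨G, _, x, hx, rfl⟩ := hC
  exact ⟨x, Set.self_mem_ordConnectedComponent.2 hx⟩

lemma ConvFam.ordConnected {A : Set (Set X)} {C : Set X} (hC : C ∈ ConvFam A) :
    C.OrdConnected := by
  obtain ⟨G, _, x, hx, rfl⟩ := hC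
  infer_instance

lemma ConvFam.refines {A : Set (Set X)} : Refines (ConvFam A) A := by
  rintro C ⟨G, hG, x, hx, rfl⟩
  exact ⟨G, hG, Set.ordConnectedComponent_subset⟩

lemma ConvFam.cover {A : Set (Set X)} (h : ⋃₀ A = Set.univ) : ⋃₀ ConvFam A = Set.univ := by
  apply Set.eq_univ_of_forall
  intro x
  have hx : x ∈ ⋃₀ A := h ▸ Set.mem_univ x
  obtain ⟨G, hG, hxG⟩ := hx
  exact ⟨Set.ordConnectedComponent G x, ⟨G, hG, x, hxG, rfl⟩,
    Set.self_mem_ordConnectedComponent.2 hxG⟩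

lemma ConvFam.pointFinite {A : Set (Set X)} (h : PointFinite A) : PointFinite (ConvFam A) := by
  intro x
  apply ((h x).image (fun G => Set.ordConnectedComponent G x)).subset
  rintro C ⟨⟨G, hG, y, hy, rfl⟩, hxC⟩
  have hxG : x ∈ G := Set.ordConnectedComponent_subset hxC
  exact ⟨G, ⟨hG, hxG⟩, (Set.ordConnectedComponent_eq hxC).symm⟩

lemma ConvFam.mono {A B : Set (Set X)} (h : Refines A B) :
    Refines (ConvFam A) (ConvFam B) := by
  rintro C ⟨G, hG, x, hx, rfl⟩
  obtain ⟨H, hH, hGH⟩ := h G hG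
  refine ⟨Set.ordConnectedComponent H x, ⟨H, hH, x, hGH hx, rfl⟩, ?_⟩
  exact Set.subset_ordConnectedComponent (Set.self_mem_ordConnectedComponent.2 hx)
    (Set.ordConnectedComponent_subset.trans hGH)

lemma ConvFam.isOpen [TopologicalSpace X] [OrderTopology X] {A : Set (Set X)}
    (h : ∀ G ∈ A, IsOpen G) {C : Set X} (hC : C ∈ ConvFam A) : IsOpen C := by
  obtain ⟨G, hG, x, hx, rfl⟩ := hC
  rw [isOpen_iff_mem_nhds]
  intro y hy
  have h1 : Set.ordConnectedComponent G y ∈ nhds y :=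
    Set.ordConnectedComponent_mem_nhds.2 ((h G hG).mem_nhds (Set.ordConnectedComponent_subset hy))
  exact Filter.mem_of_superset h1 fun z hz => Set.mem_ordConnectedComponent_trans hy hz

/-- Zorn: in a point-finite family of nonempty sets, every member is contained in a
maximal member. -/
lemma exists_maxFam {A : Set (Set X)} (hpf : PointFinite A)
    (hne : ∀ C ∈ A, C.Nonempty) {C : Set X} (hC : C ∈ A) :
    ∃ D ∈ MaxFam A, C ⊆ D := by
  have H : ∀ c ⊆ A, IsChain (· ⊆ ·) c → c.Nonempty → ∃ ub ∈ A, ∀ s ∈ c, s ⊆ ub := by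
    intro c hcA hchain hcne
    obtain ⟨C0, hC0⟩ := hcne
    obtain ⟨x, hx⟩ := hne C0 (hcA hC0)
    set T := {D ∈ c | C0 ⊆ D} with hT
    have hTfin : T.Finite := (hpf x).subset (fun D hD => ⟨hcA hD.1, hD.2 hx⟩)
    have hTne : T.Nonempty := ⟨C0, hC0, Set.Subset.rfl⟩
    obtain ⟨m, hmT, hmmax⟩ := Set.Finite.exists_maximalFor id T hTfin hTne
    refine ⟨m, hcA hmT.1, fun D hD => ?_⟩
    rcases eq_or_ne D C0 with rfl | hne'
    · exact hmT.2
    · rcases hchain hD hC0 hne' with h | h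
      · exact h.trans hmT.2
      · have hDT : D ∈ T := ⟨hD, h⟩
        rcases eq_or_ne D m with rfl | hne2
        · exact Set.Subset.rfl
        · rcases hchain hD hmT.1 hne2 with h2 | h2
          · exact h2
          · have := hmmax hDT h2
            exact this
  obtain ⟨m, hCm, hmax⟩ := zorn_subset_nonempty A H C hC
  exact ⟨m, ⟨hmax.prop, fun D hD hmD => hmD.antisymm (hmax.le_of_ge hD hmD)⟩, hCm⟩

lemma maxFam_cover {A : Set (Set X)} (hpf : PointFinite A)
    (hne : ∀ C ∈ A, C.Nonempty) (hcov : ⋃₀ A = Set.univ) : ⋃₀ MaxFam A = Set.univ := by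
  apply Set.eq_univ_of_forall
  intro x
  have hx : x ∈ ⋃₀ A := hcov ▸ Set.mem_univ x
  obtain ⟨C, hC, hxC⟩ := hx
  obtain ⟨D, hD, hCD⟩ := exists_maxFam hpf hne hC
  exact ⟨D, hD, hCD hxC⟩

lemma maxFam_mono {A B : Set (Set X)} (h : Refines A B) (hpfB : PointFinite B)
    (hneB : ∀ C ∈ B, C.Nonempty) : Refines (MaxFam A) (MaxFam B) := by
  intro C hC
  obtain ⟨D, hD, hCD⟩ := h C hC.1
  obtain ⟨E, hE, hDE⟩ := exists_maxFam hpfB hneB hD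
  exact ⟨E, hE, hCD.trans hDE⟩

/-- A convex set and a point outside it: the point is an upper or lower bound. -/
lemma bound_of_not_mem {C : Set X} (hC : C.OrdConnected) {m : X} (hm : m ∉ C) :
    m ∈ upperBounds C ∨ m ∈ lowerBounds C := by
  by_contra hcon
  push_neg at hcon
  obtain ⟨hub, hlb⟩ := hcon
  rw [mem_upperBounds] at hub; push_neg at hub
  rw [mem_lowerBounds] at hlb; push_neg at hlb
  obtain ⟨a, ha, ham⟩ := hub
  obtain ⟨b, hb, hbm⟩ := hlb
  exact hm (hC.out hb ha ⟨hbm.le, ham.le⟩)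

variable [TopologicalSpace X] [OrderTopology X] [CompactSpace X]

/-- In a compact LOTS, a point-finite family of nonempty open convex sets has only finitely
many maximal members, provided the maximal members cover. -/
lemma maxFam_finite {A : Set (Set X)} (hpf : PointFinite A)
    (hne : ∀ C ∈ A, C.Nonempty) (hoc : ∀ C ∈ A, C.OrdConnected)
    (hop : ∀ C ∈ A, IsOpen C) (hcov : ⋃₀ MaxFam A = Set.univ) : (MaxFam A).Finite := by
  by_contra hinf
  have hinf : (MaxFam A).Infinite := hinf
  have hcov' : (Set.univ : Set X) ⊆ ⋃ C : MaxFam A, (C : Set X) := by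
    intro x _
    have hx : x ∈ ⋃₀ MaxFam A := hcov ▸ Set.mem_univ x
    obtain ⟨C, hC, hxC⟩ := hx
    exact Set.mem_iUnion.2 ⟨⟨C, hC⟩, hxC⟩
  obtain ⟨t, ht⟩ := isCompact_univ.elim_finite_subcover (fun C : MaxFam A => (C : Set X))
    (fun C => hop C C.2.1) hcov'
  set S : Set (Set X) := MaxFam A \ ((fun C : MaxFam A => (C : Set X)) '' ↑t) with hS
  have hSinf : S.Infinite := hinf.diff (t.finite_toSet.image _)
  -- for each member of S pick a member of t it meets, a common point, and a bound
  have key : ∀ D : S, ∃ p : (↥t) × Bool, ∃ c m : X,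
      c ∈ (D : Set X) ∧ c ∈ ((p.1 : MaxFam A) : Set X) ∧ m ∈ (D : Set X) ∧
      (p.2 = true → m ∈ upperBounds ((p.1 : MaxFam A) : Set X)) ∧
      (p.2 = false → m ∈ lowerBounds ((p.1 : MaxFam A) : Set X)) := by
    rintro ⟨D, hDmax, hDt⟩
    obtain ⟨x, hx⟩ := hne D hDmax.1
    have hxU := ht (Set.mem_univ x)
    simp only [Set.mem_iUnion] at hxU
    obtain ⟨C, hCt, hxC⟩ := hxU
    have hDneC : D ≠ (C : Set X) := by
      intro hEq
      exact hDt ⟨C, hCt, hEq.symm⟩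
    have hnsub : ¬ D ⊆ (C : Set X) := fun hsub => hDneC (hDmax.2 _ C.2.1 hsub)
    rw [Set.not_subset] at hnsub
    obtain ⟨m, hmD, hmC⟩ := hnsub
    rcases bound_of_not_mem (hoc _ C.2.1) hmC with hb | hb
    · exact ⟨(⟨C, hCt⟩, true), x, m, hx, hxC, hmD, fun _ => hb, fun h => by simp at h⟩
    · exact ⟨(⟨C, hCt⟩, false), x, m, hx, hxC, hmD, fun h => by simp at h, fun _ => hb⟩
  choose f cf mf hcD hcC hmD hub hlb using key
  haveI : Infinite S := hSinf.to_subtype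
  obtain ⟨p0, hp0⟩ := Finite.exists_infinite_fiber f
  set C0 : Set X := ((p0.1 : MaxFam A) : Set X) with hC0
  have hC0A : C0 ∈ A := (p0.1 : MaxFam A).2.1
  have hC0ne : (closure C0).Nonempty := (hne _ hC0A).closure
  have hclcomp : IsCompact (closure C0) := isClosed_closure.isCompact
  -- find a point in all members of the fiber
  have main : ∃ z : X, ∀ D : S, f D = p0 → z ∈ (D : Set X) := by
    rcases Bool.eq_false_or_eq_true p0.2 with hb | hb
    · -- upper bound case : use the least upper bound
      obtain ⟨z, _, hz⟩ := hclcomp.exists_isLUB hC0ne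
      refine ⟨z, fun D hD => ?_⟩
      have hbD : (f D).2 = true := by rw [hD]; exact hb
      have hmub : mf D ∈ upperBounds C0 := by rw [hC0, ← hD]; exact hub D hbD
      have h1 : z ≤ mf D := hz.2 fun y hy =>
        (closure_minimal (fun w hw => hmub hw) isClosed_Iic) hy
      have hcf : cf D ∈ C0 := by rw [hC0, ← hD]; exact hcC D
      have h2 : cf D ≤ z := hz.1 (subset_closure hcf)
      have hDA : (D : Set X) ∈ A := D.2.1.1
      exact (hoc _ hDA).out (hcD D) (hmD D) ⟨h2, h1⟩
    · -- lower bound case : use the greatest lower bound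
      obtain ⟨z, _, hz⟩ := hclcomp.exists_isGLB hC0ne
      refine ⟨z, fun D hD => ?_⟩
      have hbD : (f D).2 = false := by rw [hD]; exact hb
      have hmlb : mf D ∈ lowerBounds C0 := by rw [hC0, ← hD]; exact hlb D hbD
      have h1 : mf D ≤ z := hz.2 fun y hy =>
        (closure_minimal (fun w hw => hmlb hw) isClosed_Ici) hy
      have hcf : cf D ∈ C0 := by rw [hC0, ← hD]; exact hcC D
      have h2 : z ≤ cf D := hz.1 (subset_closure hcf)
      have hDA : (D : Set X) ∈ A := D.2.1.1
      exact (hoc _ hDA).out (hmD D) (hcD D) ⟨h1, h2⟩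
  obtain ⟨z, hzmem⟩ := main
  have hfin : {U ∈ A | z ∈ U}.Finite := hpf z
  have hinj : Function.Injective
      (fun D : ↥(f ⁻¹' {p0}) => (⟨(D : S), (D : S).2.1.1, hzmem D D.2⟩ :
        {U ∈ A | z ∈ U})) := by
    intro D1 D2 hEq
    apply Subtype.ext; apply Subtype.ext
    simpa using congrArg Subtype.val hEq
  haveI := hfin.to_subtype
  exact (Finite.of_injective _ hinj).not_infinite hp0

end Aux

theorem stmt11 {X : Type*} [LinearOrder X] [TopologicalSpace X] [OrderTopology X]
    [CompactSpace X] (h : MonotonicallyCountablyMetacompact X) :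
    ∃ s : Set (Set X) → Set (Set X),
      (∀ U, IsOpenCoverSets U → U.Countable →
        IsOpenCoverSets (s U) ∧ (s U).Finite ∧ Refines (s U) U) ∧
      (∀ U V, IsOpenCoverSets U → IsOpenCoverSets V → U.Countable → V.Countable → Refines U V →
        Refines (s U) (s V)) := by
  obtain ⟨r, hr1, hr2⟩ := h
  refine ⟨fun U => MaxFam (ConvFam (r U)), ?_, ?_⟩
  · intro U hU hUc
    obtain ⟨⟨hop, hcov⟩, hpf, href⟩ := hr1 U hU hUc
    have hop' : ∀ C ∈ ConvFam (r U), IsOpen C := fun C hC => ConvFam.isOpen hop hC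
    have hne' : ∀ C ∈ ConvFam (r U), C.Nonempty := fun C hC => ConvFam.nonempty hC
    have hoc' : ∀ C ∈ ConvFam (r U), C.OrdConnected := fun C hC => ConvFam.ordConnected hC
    have hpf' : PointFinite (ConvFam (r U)) := ConvFam.pointFinite hpf
    have hcov' : ⋃₀ MaxFam (ConvFam (r U)) = Set.univ := maxFam_cover hpf' hne' (ConvFam.cover hcov)
    refine ⟨⟨fun C hC => hop' C hC.1, hcov'⟩,
      maxFam_finite hpf' hne' hoc' hop' hcov', ?_⟩
    intro C hC
    obtain ⟨G, hG, hCG⟩ := ConvFam.refines C hC.1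
    obtain ⟨W, hW, hGW⟩ := href G hG
    exact ⟨W, hW, hCG.trans hGW⟩
  · intro U V hU hV hUc hVc hUV
    obtain ⟨⟨_, _⟩, hpfV, _⟩ := hr1 V hV hVc
    have hrUV : Refines (r U) (r V) := hr2 U V hU hV hUc hVc hUV
    exact maxFam_mono (ConvFam.mono hrUV) (ConvFam.pointFinite hpfV)
      (fun C hC => ConvFam.nonempty hC)
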